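/- For every μ > 0 there exists a unique x ∈ ℝ^n minimizing the log-exponential aggregation function f(·;μ) over ℝ^n, i.e., there is exactly one x with f(x;μ) ≤ f(y;μ) for all y ∈ ℝ^n. -/

import Mathlib

open Real Filter

noncomputable section

variable {n m : ℕ}

/-- `g_i(x;μ) = √(‖x − c_i‖² + μ²)`. -/
def sebG (c : Fin m → EuclideanSpace ℝ (Fin n)) (μ : ℝ) (x : EuclideanSpace ℝ (Fin n))
    (i : Fin m) : ℝ :=
  Real.sqrt (‖x - c i‖ ^ 2 + μ ^ 2)

/-- `f_i(x;μ) = g_i(x;μ) + r_i`. -/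
def sebFi (c : Fin m → EuclideanSpace ℝ (Fin n)) (r : Fin m → ℝ) (μ : ℝ)
    (x : EuclideanSpace ℝ (Fin n)) (i : Fin m) : ℝ :=
  sebG c μ x i + r i

/-- the log-exponential aggregation function `f(x;μ) = μ ln(Σ_i exp(f_i(x;μ)/μ))`. -/
def sebFmu (c : Fin m → EuclideanSpace ℝ (Fin n)) (r : Fin m → ℝ) (μ : ℝ)
    (x : EuclideanSpace ℝ (Fin n)) : ℝ :=
  μ * Real.log (∑ i : Fin m, Real.exp (sebFi c r μ x i / μ))

/-- `f(x) = max_i (‖x − c_i‖ + r_i)`. -/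
def sebF (c : Fin m → EuclideanSpace ℝ (Fin n)) (r : Fin m → ℝ)
    (x : EuclideanSpace ℝ (Fin n)) : ℝ :=
  ⨆ i : Fin m, (‖x - c i‖ + r i)

/-- `f_∞(x;μ) = max_i f_i(x;μ)`. -/
def sebFinf (c : Fin m → EuclideanSpace ℝ (Fin n)) (r : Fin m → ℝ) (μ : ℝ)
    (x : EuclideanSpace ℝ (Fin n)) : ℝ :=
  ⨆ i : Fin m, sebFi c r μ x i

/-- `λ_i(x;μ)`. -/
def sebLam (c : Fin m → EuclideanSpace ℝ (Fin n)) (r : Fin m → ℝ) (μ : ℝ)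
    (x : EuclideanSpace ℝ (Fin n)) (i : Fin m) : ℝ :=
  Real.exp (sebFi c r μ x i / μ) / ∑ j : Fin m, Real.exp (sebFi c r μ x j / μ)

/-- `∇f_i(x;μ) = (x − c_i)/g_i(x;μ)`. -/
def sebGradI (c : Fin m → EuclideanSpace ℝ (Fin n)) (μ : ℝ)
    (x : EuclideanSpace ℝ (Fin n)) (i : Fin m) : EuclideanSpace ℝ (Fin n) :=
  (sebG c μ x i)⁻¹ • (x - c i)

/-- `∇f(x;μ) = Σ_i λ_i(x;μ) ∇f_i(x;μ)`. -/
def sebGrad (c : Fin m → EuclideanSpace ℝ (Fin n)) (r : Fin m → ℝ) (μ : ℝ)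
    (x : EuclideanSpace ℝ (Fin n)) : EuclideanSpace ℝ (Fin n) :=
  ∑ i : Fin m, sebLam c r μ x i • sebGradI c μ x i

/-- `S(x;μ,ε) = {i : λ_i(x;μ) ≥ ε}`. -/
def sebS (c : Fin m → EuclideanSpace ℝ (Fin n)) (r : Fin m → ℝ) (μ ε : ℝ)
    (x : EuclideanSpace ℝ (Fin n)) : Finset (Fin m) :=
  Finset.univ.filter (fun i => ε ≤ sebLam c r μ x i)

/-- `λ̃_i(x;μ)`. -/
def sebLamT (c : Fin m → EuclideanSpace ℝ (Fin n)) (r : Fin m → ℝ) (μ ε : ℝ)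
    (x : EuclideanSpace ℝ (Fin n)) (i : Fin m) : ℝ :=
  Real.exp (sebFi c r μ x i / μ) / ∑ j ∈ sebS c r μ ε x, Real.exp (sebFi c r μ x j / μ)

/-- the truncated log-exponential function `f̃(x;μ)`. -/
def sebFmuT (c : Fin m → EuclideanSpace ℝ (Fin n)) (r : Fin m → ℝ) (μ ε : ℝ)
    (x : EuclideanSpace ℝ (Fin n)) : ℝ :=
  μ * Real.log (∑ i ∈ sebS c r μ ε x, Real.exp (sebFi c r μ x i / μ))

/-- `∇f̃(x;μ) = Σ_{i∈S} λ̃_i(x;μ) ∇f_i(x;μ)`. -/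
def sebGradT (c : Fin m → EuclideanSpace ℝ (Fin n)) (r : Fin m → ℝ) (μ ε : ℝ)
    (x : EuclideanSpace ℝ (Fin n)) : EuclideanSpace ℝ (Fin n) :=
  ∑ i ∈ sebS c r μ ε x, sebLamT c r μ ε x i • sebGradI c μ x i

/-- `∇²f_i(x;μ) = (1/g_i) I_n − (x−c_i)(x−c_i)ᵀ/g_i³` as an `n×n` matrix. -/
def sebHessI (c : Fin m → EuclideanSpace ℝ (Fin n)) (μ : ℝ)
    (x : EuclideanSpace ℝ (Fin n)) (i : Fin m) : Matrix (Fin n) (Fin n) ℝ :=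
  (sebG c μ x i)⁻¹ • (1 : Matrix (Fin n) (Fin n) ℝ)
    - ((sebG c μ x i) ^ 3)⁻¹ •
        Matrix.vecMulVec (fun j => (x - c i) j) (fun j => (x - c i) j)

/-- `∇²f(x;μ)` as an `n×n` matrix. -/
def sebHess (c : Fin m → EuclideanSpace ℝ (Fin n)) (r : Fin m → ℝ) (μ : ℝ)
    (x : EuclideanSpace ℝ (Fin n)) : Matrix (Fin n) (Fin n) ℝ :=
  (∑ i : Fin m, (sebLam c r μ x i • sebHessI c μ x i
      + (μ⁻¹ * sebLam c r μ x i) •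
          Matrix.vecMulVec (fun j => sebGradI c μ x i j) (fun j => sebGradI c μ x i j)))
    - μ⁻¹ • Matrix.vecMulVec (fun j => sebGrad c r μ x j) (fun j => sebGrad c r μ x j)

/-- `∇²f̃(x;μ)` as an `n×n` matrix. -/
def sebHessT (c : Fin m → EuclideanSpace ℝ (Fin n)) (r : Fin m → ℝ) (μ ε : ℝ)
    (x : EuclideanSpace ℝ (Fin n)) : Matrix (Fin n) (Fin n) ℝ :=
  (∑ i ∈ sebS c r μ ε x, (sebLamT c r μ ε x i • sebHessI c μ x i
      + (μ⁻¹ * sebLamT c r μ ε x i) •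
          Matrix.vecMulVec (fun j => sebGradI c μ x i j) (fun j => sebGradI c μ x i j)))
    - μ⁻¹ • Matrix.vecMulVec (fun j => sebGradT c r μ ε x j) (fun j => sebGradT c r μ ε x j)

end

set_option maxHeartbeats 1000000

noncomputable section
variable {n m : ℕ}

lemma sebG_eq_norm (c : Fin m → EuclideanSpace ℝ (Fin n)) (μ : ℝ)
    (x : EuclideanSpace ℝ (Fin n)) (i : Fin m) :
    sebG c μ x i = ‖(WithLp.equiv 2 (EuclideanSpace ℝ (Fin n) × ℝ)).symm (x - c i, μ)‖ := by
  rw [WithLp.prod_norm_eq_of_L2]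
  simp [sebG, Real.norm_eq_abs, sq_abs]

lemma sebG_midpoint_lt {c : Fin m → EuclideanSpace ℝ (Fin n)} {μ : ℝ} (hμ : 0 < μ)
    {x y : EuclideanSpace ℝ (Fin n)} (hxy : x ≠ y) (i : Fin m) :
    sebG c μ (midpoint ℝ x y) i < (sebG c μ x i + sebG c μ y i) / 2 := by
  set e := (WithLp.equiv 2 (EuclideanSpace ℝ (Fin n) × ℝ)).symm with he
  set u := e (x - c i, μ) with hu
  set v := e (y - c i, μ) with hv
  have hu0 : u ≠ 0 := by
    intro h
    have : ((x - c i, μ) : EuclideanSpace ℝ (Fin n) × ℝ) = 0 :=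
      (WithLp.equiv 2 _).symm.injective (by simpa [hu, he] using h)
    exact hμ.ne' (congrArg Prod.snd this)
  have hv0 : v ≠ 0 := by
    intro h
    have : ((y - c i, μ) : EuclideanSpace ℝ (Fin n) × ℝ) = 0 :=
      (WithLp.equiv 2 _).symm.injective (by simpa [hv, he] using h)
    exact hμ.ne' (congrArg Prod.snd this)
  have hray : ¬ SameRay ℝ u v := by
    intro h
    obtain ⟨r₁, r₂, hr₁, hr₂, hEq⟩ := h.exists_pos hu0 hv0
    have hEq' : r₁ • (x - c i) = r₂ • (y - c i) ∧ (r₁ = r₂ ∨ μ = 0) := by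
      have h2 := congrArg (WithLp.equiv 2 (EuclideanSpace ℝ (Fin n) × ℝ)) hEq
      simpa [hu, hv, he, Prod.ext_iff, smul_eq_mul, mul_eq_mul_right_iff] using h2
    obtain ⟨hfst, hr | hr⟩ := hEq'
    swap
    · exact hμ.ne' hr
    rw [hr] at hfst
    have : x - c i = y - c i := smul_right_injective _ hr₂.ne' hfst
    exact hxy (by simpa using congrArg (· + c i) this)
  have hlt := norm_add_lt_of_not_sameRay hray
  have hmid : sebG c μ (midpoint ℝ x y) i = ‖(2:ℝ)⁻¹ • (u + v)‖ := by
    rw [sebG_eq_norm]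
    congr 1
    have heq : (2:ℝ)⁻¹ • (u + v)
        = e ((2:ℝ)⁻¹ • (((x - c i, μ) : EuclideanSpace ℝ (Fin n) × ℝ) + (y - c i, μ))) := rfl
    rw [heq]
    congr 1
    refine Prod.ext ?_ ?_
    · show midpoint ℝ x y - c i = (2⁻¹ : ℝ) • (x - c i + (y - c i))
      rw [midpoint_eq_smul_add, invOf_eq_inv]
      module
    · show μ = (2⁻¹ : ℝ) • (μ + μ)
      simp [smul_eq_mul]; ring
  rw [hmid, norm_smul, sebG_eq_norm, sebG_eq_norm]
  rw [← hu, ← hv]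
  rw [Real.norm_eq_abs]
  rw [abs_of_pos (by norm_num : (0:ℝ) < 2⁻¹)]
  linarith

lemma sebFmu_midpoint_lt (hm : 1 ≤ m) {c : Fin m → EuclideanSpace ℝ (Fin n)} {r : Fin m → ℝ}
    {μ : ℝ} (hμ : 0 < μ) {x y : EuclideanSpace ℝ (Fin n)} (hxy : x ≠ y) :
    sebFmu c r μ (midpoint ℝ x y) < (sebFmu c r μ x + sebFmu c r μ y) / 2 := by
  have hne : (Finset.univ : Finset (Fin m)).Nonempty := by
    simpa [Finset.univ_nonempty_iff] using Fin.pos_iff_nonempty.mp hm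
  set p : Fin m → ℝ := fun i => Real.exp (sebFi c r μ x i / (2 * μ)) with hp
  set q : Fin m → ℝ := fun i => Real.exp (sebFi c r μ y i / (2 * μ)) with hq
  have hstep : ∀ i, Real.exp (sebFi c r μ (midpoint ℝ x y) i / μ) < p i * q i := by
    intro i
    have h1 := sebG_midpoint_lt (c := c) hμ hxy i
    have h2 : sebFi c r μ (midpoint ℝ x y) i < (sebFi c r μ x i + sebFi c r μ y i) / 2 := by
      simp only [sebFi]; linarith
    rw [hp, hq, ← Real.exp_add]
    apply Real.exp_lt_exp.2
    rw [← add_div]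
    rw [div_lt_div_iff₀ hμ (by linarith : (0:ℝ) < 2 * μ)] at *
    nlinarith
  have hsum : ∑ i : Fin m, Real.exp (sebFi c r μ (midpoint ℝ x y) i / μ)
      < ∑ i : Fin m, p i * q i :=
    Finset.sum_lt_sum_of_nonempty hne (fun i _ => hstep i)
  have hCS := Finset.sum_mul_sq_le_sq_mul_sq Finset.univ p q
  have hp2 : ∀ i, p i ^ 2 = Real.exp (sebFi c r μ x i / μ) := by
    intro i; rw [hp]; rw [sq, ← Real.exp_add]; congr 1; field_simp; ring
  have hq2 : ∀ i, q i ^ 2 = Real.exp (sebFi c r μ y i / μ) := by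
    intro i; rw [hq]; rw [sq, ← Real.exp_add]; congr 1; field_simp; ring
  set S := ∑ i : Fin m, Real.exp (sebFi c r μ (midpoint ℝ x y) i / μ) with hS
  set A := ∑ i : Fin m, Real.exp (sebFi c r μ x i / μ) with hA
  set B := ∑ i : Fin m, Real.exp (sebFi c r μ y i / μ) with hB
  have hSpos : 0 < S := Finset.sum_pos (fun i _ => Real.exp_pos _) hne
  have hApos : 0 < A := Finset.sum_pos (fun i _ => Real.exp_pos _) hne
  have hBpos : 0 < B := Finset.sum_pos (fun i _ => Real.exp_pos _) hne
  have hAB : S ^ 2 < A * B := by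
    calc S ^ 2 < (∑ i : Fin m, p i * q i) ^ 2 := by
          apply pow_lt_pow_left₀ hsum hSpos.le (by norm_num)
      _ ≤ (∑ i : Fin m, p i ^ 2) * ∑ i : Fin m, q i ^ 2 := hCS
      _ = A * B := by rw [hA, hB]; congr 1 <;> exact Finset.sum_congr rfl (by simp [hp2, hq2])
  have hlog : Real.log (S ^ 2) < Real.log (A * B) :=
    Real.log_lt_log (by positivity) hAB
  rw [Real.log_pow, Real.log_mul hApos.ne' hBpos.ne'] at hlog
  simp only [sebFmu, ← hS, ← hA, ← hB]
  push_cast at hlog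
  nlinarith [hlog, hμ]

lemma sebFmu_continuous (hm : 1 ≤ m) (c : Fin m → EuclideanSpace ℝ (Fin n)) (r : Fin m → ℝ)
    {μ : ℝ} (hμ : 0 < μ) : Continuous (sebFmu c r μ) := by
  have hne : (Finset.univ : Finset (Fin m)).Nonempty := ⟨⟨0, hm⟩, Finset.mem_univ _⟩
  have hfi : ∀ i, Continuous (fun x => sebFi c r μ x i) := by
    intro i
    apply Continuous.add _ continuous_const
    exact Real.continuous_sqrt.comp
      ((((continuous_id.sub continuous_const).norm.pow 2).add continuous_const))
  apply Continuous.mul continuous_const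
  apply Continuous.log
  · exact continuous_finset_sum _ fun i _ => ((hfi i).div_const μ).rexp
  · intro x
    exact (Finset.sum_pos (fun i _ => Real.exp_pos _) hne).ne'

theorem stmt_18 (n m : ℕ) (hm : 1 ≤ m) (c : Fin m → EuclideanSpace ℝ (Fin n))
    (r : Fin m → ℝ) (hr : ∀ i, 0 ≤ r i) (μ : ℝ) (hμ : 0 < μ) :
    ∃! x : EuclideanSpace ℝ (Fin n), ∀ y, sebFmu c r μ x ≤ sebFmu c r μ y := by
  have : NeZero m := ⟨by omega⟩
  have i0 : Fin m := ⟨0, hm⟩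
  have hlb : ∀ x : EuclideanSpace ℝ (Fin n), ‖x‖ - ‖c i0‖ ≤ sebFmu c r μ x := by
    intro x
    have h1 : Real.exp (sebFi c r μ x i0 / μ) ≤ ∑ i : Fin m, Real.exp (sebFi c r μ x i / μ) :=
      Finset.single_le_sum (f := fun i => Real.exp (sebFi c r μ x i / μ)) (fun i _ => (Real.exp_pos _).le) (Finset.mem_univ i0)
    have h2 : sebFi c r μ x i0 / μ ≤ Real.log (∑ i : Fin m, Real.exp (sebFi c r μ x i / μ)) := by
      rw [← Real.log_exp (sebFi c r μ x i0 / μ)]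
      exact Real.log_le_log (Real.exp_pos _) h1
    have h3 : sebFi c r μ x i0 ≤ sebFmu c r μ x := by
      rw [sebFmu]
      calc sebFi c r μ x i0 = μ * (sebFi c r μ x i0 / μ) := by field_simp
        _ ≤ _ := by exact mul_le_mul_of_nonneg_left h2 hμ.le
    have h4 : ‖x - c i0‖ ≤ sebG c μ x i0 := by
      rw [sebG]
      have h := Real.sqrt_le_sqrt
        (by nlinarith [sq_nonneg μ] : ‖x - c i0‖ ^ 2 ≤ ‖x - c i0‖ ^ 2 + μ ^ 2)
      rwa [Real.sqrt_sq (norm_nonneg _)] at h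
    have h5 : ‖x‖ - ‖c i0‖ ≤ ‖x - c i0‖ := norm_sub_norm_le x (c i0)
    have := hr i0
    simp only [sebFi] at h3
    linarith
  have h6 : Tendsto (fun x : EuclideanSpace ℝ (Fin n) => ‖x‖ - ‖c i0‖) (cocompact _) atTop := by
    simpa [sub_eq_add_neg] using
      tendsto_atTop_add_const_right (cocompact (EuclideanSpace ℝ (Fin n))) (-‖c i0‖)
        tendsto_norm_cocompact_atTop
  have hcoer : Tendsto (sebFmu c r μ) (cocompact _) atTop := tendsto_atTop_mono hlb h6
  obtain ⟨x, hx⟩ := (sebFmu_continuous hm c r hμ).exists_forall_le hcoer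
  refine ⟨x, hx, ?_⟩
  intro z hz
  by_contra hne
  have hzx : z ≠ x := hne
  have key := sebFmu_midpoint_lt hm hμ hzx (c := c) (r := r)
  have h1 := hx (midpoint ℝ z x)
  have h2 := hz x
  have h3 := hx z
  linarith

end
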